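/- Let S be the (nonempty, compact) set of minimizers of F. For every δ > 0, the ratio (∫_{{x ∈ ℝ^p : dist(x,S) ≥ δ}} exp(−2βF(x)) dx) / (∫_{ℝ^p} exp(−2βF(x)) dx) tends to 0 as β → +∞; equivalently, the distance ‖X_β − π(X_β)‖ from X_β to the Lasso set converges to 0 in probability as β → +∞, where π denotes the metric projection onto S. -/

import Mathlib

open MeasureTheory

private lemma aux_norm_le_l1 (p : ℕ) (x : EuclideanSpace ℝ (Fin p)) : ‖x‖ ≤ ∑ i, |x i| := by
  rw [EuclideanSpace.norm_eq]
  have h1 : ∑ i, ‖x i‖ ^ 2 ≤ (∑ i, |x i|) ^ 2 := by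
    simpa [Real.norm_eq_abs] using
      Finset.sum_sq_le_sq_sum_of_nonneg (f := fun i => |x i|) (s := Finset.univ)
        (fun i _ => abs_nonneg _)
  calc Real.sqrt (∑ i, ‖x i‖ ^ 2) ≤ Real.sqrt ((∑ i, |x i|) ^ 2) := Real.sqrt_le_sqrt h1
    _ = ∑ i, |x i| := Real.sqrt_sq (Finset.sum_nonneg fun i _ => abs_nonneg _)

private lemma aux_integrable_exp (p : ℕ) :
    Integrable (fun x : EuclideanSpace ℝ (Fin p) => Real.exp (-2 * ‖x‖)) := by
  set r : ℝ := (p : ℝ) + 1 with hr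
  have hr1 : (1:ℝ) ≤ r := le_add_of_nonneg_left (Nat.cast_nonneg p)
  have hint : Integrable (fun x : EuclideanSpace ℝ (Fin p) => (1 + ‖x‖) ^ (-r)) := by
    apply integrable_one_add_norm
    simp [hr, finrank_euclideanSpace]
  refine ((hint.const_mul (r ^ r)).mono' ?_ ?_)
  · exact (Real.continuous_exp.comp (continuous_const.mul continuous_norm)).aestronglyMeasurable
  · filter_upwards with x
    set t : ℝ := ‖x‖
    have ht : 0 ≤ t := norm_nonneg _
    have key : (1 + t) ^ r ≤ r ^ r * Real.exp t := by
      have h1 : (1 + t) ^ r ≤ (r * (1 + t / r)) ^ r := by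
        apply Real.rpow_le_rpow (by linarith) ?_ (by linarith)
        have : r * (1 + t / r) = r + t := by field_simp
        rw [this]; linarith
      have h2 : (r * (1 + t / r)) ^ r = r ^ r * (1 + t / r) ^ r :=
        Real.mul_rpow (by linarith) (by positivity)
      have h3 : (1 + t / r) ^ r ≤ Real.exp (t / r) ^ r :=
        Real.rpow_le_rpow (by positivity) (Real.add_one_le_exp _ |>.trans_eq' (by ring)) (by linarith)
      have h4 : Real.exp (t / r) ^ r = Real.exp t := by
        rw [← Real.exp_mul]; congr 1; field_simp
      calc (1 + t) ^ r ≤ (r * (1 + t / r)) ^ r := h1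
        _ = r ^ r * (1 + t / r) ^ r := h2
        _ ≤ r ^ r * Real.exp t := by
            rw [← h4]; exact mul_le_mul_of_nonneg_left h3 (by positivity)
    have hpos : (0:ℝ) < (1 + t) ^ r := by positivity
    have key2 : Real.exp (-t) ≤ r ^ r * (1 + t) ^ (-r) := by
      rw [Real.rpow_neg (by linarith), ← div_eq_mul_inv, le_div_iff₀ hpos]
      calc Real.exp (-t) * (1 + t) ^ r ≤ Real.exp (-t) * (r ^ r * Real.exp t) :=
            mul_le_mul_of_nonneg_left key (Real.exp_pos _).le
        _ = r ^ r := by rw [mul_comm (r^r), ← mul_assoc, ← Real.exp_add]; simp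
    have hexp : Real.exp (-2 * t) ≤ Real.exp (-t) := Real.exp_le_exp.2 (by linarith)
    rw [Real.norm_eq_abs, abs_of_pos (Real.exp_pos _)]
    exact hexp.trans key2

/-- Concentration of the posterior on the Lasso set: for every `δ > 0`, the mass that
the (unnormalized) posterior `exp(−2βF)` puts at Euclidean distance `≥ δ` from the set
`S` of minimizers of `F`, relative to the total mass `Z_β`, tends to `0` as `β → +∞`;
i.e. `‖X_β − π(X_β)‖ → 0` in probability. -/
theorem posterior_concentrates_on_lasso_set (p n : ℕ)
    (A : Matrix (Fin n) (Fin p) ℝ) (y : Fin n → ℝ)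
    (F : EuclideanSpace ℝ (Fin p) → ℝ)
    (hF : ∀ x, F x = (∑ i, |x i|) + (∑ j, ((∑ i, A j i * x i) - y j) ^ 2) / 2)
    (S : Set (EuclideanSpace ℝ (Fin p))) (hS : S = {x | ∀ z, F x ≤ F z})
    (δ : ℝ) (hδ : 0 < δ) :
    Filter.Tendsto (fun β : ℝ =>
        (∫ x in {x : EuclideanSpace ℝ (Fin p) | δ ≤ Metric.infDist x S},
          Real.exp (-2 * β * F x)) /
        (∫ x : EuclideanSpace ℝ (Fin p), Real.exp (-2 * β * F x)))
      Filter.atTop (nhds 0) := by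
  have hFnorm : ∀ x : EuclideanSpace ℝ (Fin p), ‖x‖ ≤ F x := by
    intro x
    rw [hF x]
    have h2 : 0 ≤ (∑ j, ((∑ i, A j i * x i) - y j) ^ 2) / 2 := by positivity
    linarith [aux_norm_le_l1 p x]
  have hF0 : ∀ x : EuclideanSpace ℝ (Fin p), 0 ≤ F x := fun x => (norm_nonneg x).trans (hFnorm x)
  have hFc : Continuous F := by
    have : F = fun x : EuclideanSpace ℝ (Fin p) => (∑ i, |x i|) + (∑ j, ((∑ i, A j i * x i) - y j) ^ 2) / 2 :=
      funext hF
    rw [this]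
    have hproj : ∀ i : Fin p, Continuous fun x : EuclideanSpace ℝ (Fin p) => x i :=
      fun i => (EuclideanSpace.proj i).continuous
    apply Continuous.add
    · exact continuous_finset_sum _ fun i _ => (hproj i).abs
    · apply Continuous.div_const
      exact continuous_finset_sum _ fun j _ =>
        ((continuous_finset_sum _ fun i _ => continuous_const.mul (hproj i)).sub
          continuous_const).pow 2
  -- global minimizer
  obtain ⟨x₀, hx₀K, hx₀min⟩ :=
    (isCompact_closedBall (0:EuclideanSpace ℝ (Fin p)) (F 0 + 1)).exists_isMinOn
      ⟨0, Metric.mem_closedBall_self (by linarith [hF0 0])⟩ hFc.continuousOn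
  have hx₀glob : ∀ z, F x₀ ≤ F z := by
    intro z
    by_cases hz : z ∈ Metric.closedBall (0:EuclideanSpace ℝ (Fin p)) (F 0 + 1)
    · exact hx₀min hz
    · have hz' : F 0 + 1 < ‖z‖ := by
        simpa [Metric.mem_closedBall, dist_zero_right, not_le] using hz
      have h0 : F x₀ ≤ F 0 := hx₀min (Metric.mem_closedBall_self (by linarith [hF0 0]))
      linarith [hFnorm z]
  have hSclosed : IsClosed S := by
    rw [hS, Set.setOf_forall]
    exact isClosed_iInter fun z => isClosed_le hFc continuous_const
  set m := F x₀ with hm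
  set T : Set (EuclideanSpace ℝ (Fin p)) := {x : EuclideanSpace ℝ (Fin p) | δ ≤ Metric.infDist x S} with hT
  have hTclosed : IsClosed T := isClosed_le continuous_const (Metric.continuous_infDist_pt S)
  have hTmeas : MeasurableSet T := hTclosed.measurableSet
  by_cases hTne : T.Nonempty
  swap
  · have hTempty : T = ∅ := Set.not_nonempty_iff_eq_empty.mp hTne
    simp only [hTempty, Measure.restrict_empty, integral_zero_measure, zero_div]
    exact (tendsto_const_nhds :
      Filter.Tendsto (fun _ : ℝ => (0:ℝ)) Filter.atTop (nhds 0))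
  obtain ⟨t, ht⟩ := hTne
  set R := max ‖t‖ (F t) with hR
  set K := T ∩ Metric.closedBall (0:EuclideanSpace ℝ (Fin p)) R with hK
  have hKcomp : IsCompact K := (isCompact_closedBall _ _).inter_left hTclosed
  have htK : t ∈ K := ⟨ht, by rw [Metric.mem_closedBall, dist_zero_right]; exact le_max_left _ _⟩
  obtain ⟨x₁, hx₁K, hx₁min⟩ := hKcomp.exists_isMinOn ⟨t, htK⟩ hFc.continuousOn
  set m' := F x₁ with hm'
  have hx₁T : x₁ ∈ T := hx₁K.1
  have hx₁S : x₁ ∉ S := by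
    intro h
    have h1 : Metric.infDist x₁ S = 0 := Metric.infDist_zero_of_mem h
    have h2 : δ ≤ Metric.infDist x₁ S := hx₁T
    linarith
  have hmm' : m < m' := by
    rw [hS] at hx₁S
    rcases not_forall.mp hx₁S with ⟨z, hz⟩
    push_neg at hz
    exact lt_of_le_of_lt (hx₀glob z) hz
  have hTlow : ∀ x ∈ T, m' ≤ F x := by
    intro x hx
    by_cases hxR : ‖x‖ ≤ R
    · exact hx₁min ⟨hx, by simpa [Metric.mem_closedBall, dist_zero_right] using hxR⟩
    · have h1 : m' ≤ F t := hx₁min htK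
      have h2 : F t ≤ R := le_max_right _ _
      push_neg at hxR
      linarith [hFnorm x]
  set η := (m' - m) / 2 with hη
  have hηpos : 0 < η := by rw [hη]; linarith
  have hopen : IsOpen {x : EuclideanSpace ℝ (Fin p) | F x < m + η} := isOpen_lt hFc continuous_const
  have hx₀mem : x₀ ∈ {x : EuclideanSpace ℝ (Fin p) | F x < m + η} := by
    simp only [Set.mem_setOf_eq]; linarith
  obtain ⟨r, hrpos, hball⟩ := Metric.isOpen_iff.mp hopen x₀ hx₀mem
  set Vr := (volume (Metric.ball x₀ r)).toReal with hVr
  have hVrpos : 0 < Vr := by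
    rw [hVr]
    exact ENNReal.toReal_pos (Metric.measure_ball_pos _ _ hrpos).ne' measure_ball_lt_top.ne
  set C := ∫ x : EuclideanSpace ℝ (Fin p), Real.exp (-2 * ‖x‖) with hC
  have hCint := aux_integrable_exp p
  have hInt : ∀ β : ℝ, 1 ≤ β → Integrable (fun x : EuclideanSpace ℝ (Fin p) => Real.exp (-2 * β * F x)) := by
    intro β hβ
    refine hCint.mono' ?_ ?_
    · exact (Real.continuous_exp.comp (continuous_const.mul hFc)).aestronglyMeasurable
    · filter_upwards with x
      rw [Real.norm_eq_abs, abs_of_pos (Real.exp_pos _)]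
      apply Real.exp_le_exp.2
      nlinarith [hFnorm x, norm_nonneg x, hF0 x,
        mul_nonneg (sub_nonneg.2 hβ) (hF0 x)]
  have hDen : ∀ β : ℝ, 1 ≤ β →
      Real.exp (-2 * β * (m + η)) * Vr ≤ ∫ x : EuclideanSpace ℝ (Fin p), Real.exp (-2 * β * F x) := by
    intro β hβ
    have h1 : ∫ x in Metric.ball x₀ r, Real.exp (-2 * β * (m + η)) ≤
        ∫ x in Metric.ball x₀ r, Real.exp (-2 * β * F x) := by
      apply setIntegral_mono_on
      · exact integrableOn_const measure_ball_lt_top.ne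
      · exact (hInt β hβ).integrableOn
      · exact measurableSet_ball
      · intro x hx
        apply Real.exp_le_exp.2
        have hx' : F x < m + η := hball hx
        nlinarith
    have h2 : ∫ x in Metric.ball x₀ r, Real.exp (-2 * β * F x) ≤
        ∫ x : EuclideanSpace ℝ (Fin p), Real.exp (-2 * β * F x) :=
      setIntegral_le_integral (hInt β hβ)
        (Filter.Eventually.of_forall fun x => (Real.exp_pos _).le)
    rw [setIntegral_const, smul_eq_mul, mul_comm, measureReal_def] at h1
    linarith
  have hNum : ∀ β : ℝ, 1 ≤ β →
      (∫ x in T, Real.exp (-2 * β * F x)) ≤ Real.exp (-2 * (β - 1) * m') * C := by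
    intro β hβ
    have hb : ∀ x ∈ T, Real.exp (-2 * β * F x) ≤
        Real.exp (-2 * (β - 1) * m') * Real.exp (-2 * ‖x‖) := by
      intro x hx
      rw [← Real.exp_add]
      apply Real.exp_le_exp.2
      have h1 := hTlow x hx
      have h2 := hFnorm x
      have h3 : (β - 1) * m' ≤ (β - 1) * F x :=
        mul_le_mul_of_nonneg_left h1 (by linarith)
      linarith
    calc (∫ x in T, Real.exp (-2 * β * F x))
        ≤ ∫ x in T, Real.exp (-2 * (β - 1) * m') * Real.exp (-2 * ‖x‖) :=
          setIntegral_mono_on ((hInt β hβ).integrableOn)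
            ((hCint.const_mul _).integrableOn) hTmeas hb
      _ ≤ ∫ x : EuclideanSpace ℝ (Fin p), Real.exp (-2 * (β - 1) * m') * Real.exp (-2 * ‖x‖) :=
          setIntegral_le_integral (hCint.const_mul _)
            (Filter.Eventually.of_forall fun x => by positivity)
      _ = Real.exp (-2 * (β - 1) * m') * C := by rw [integral_const_mul]
  have hbound : Filter.Tendsto
      (fun β : ℝ => (Real.exp (2 * m') * (C / Vr)) * Real.exp (-(2 * η) * β))
      Filter.atTop (nhds 0) := by
    have h1 : Filter.Tendsto (fun β : ℝ => -(2 * η) * β) Filter.atTop Filter.atBot :=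
      Filter.tendsto_id.const_mul_atTop_of_neg (by linarith)
    have h2 := (Real.tendsto_exp_atBot.comp h1).const_mul (Real.exp (2 * m') * (C / Vr))
    simpa using h2
  apply tendsto_of_tendsto_of_tendsto_of_le_of_le' tendsto_const_nhds hbound
  · filter_upwards [Filter.eventually_ge_atTop (1:ℝ)] with β hβ
    exact div_nonneg (setIntegral_nonneg hTmeas fun x _ => (Real.exp_pos _).le)
      (integral_nonneg fun x => (Real.exp_pos _).le)
  · filter_upwards [Filter.eventually_ge_atTop (1:ℝ)] with β hβ
    have hNb := hNum β hβ
    have hDb := hDen β hβ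
    have hDlow : 0 < Real.exp (-2 * β * (m + η)) * Vr := by positivity
    have h := div_le_div₀ (by positivity) hNb hDlow hDb
    refine h.trans_eq ?_
    rw [mul_div_mul_comm]
    have hexp : Real.exp (-2 * (β - 1) * m') / Real.exp (-2 * β * (m + η)) =
        Real.exp (2 * m') * Real.exp (-(2 * η) * β) := by
      rw [← Real.exp_sub, ← Real.exp_add]
      congr 1
      rw [hη]
      ring
    rw [hexp]
    ring
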